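/- Let a > 0, b > 0, c ∈ (−1,0) and t₀ ∈ ℝ. Then there exist T > t₀ and a C² function h : [t₀,T] → ℝ with h > 0 on [t₀,T], satisfying h''(t) = (1 − h'(t)²)/(a·h(t)) for all t ∈ [t₀,T], with h(t₀) = b and h'(t₀) = c, and such that h'(T) = 0 (in particular h(T) > 0). -/

import Mathlib

open Set MeasureTheory intervalIntegral

/-- Existence of a solution of `h'' = (1 - h'²)/(a·h)` starting at `h(t₀) = b > 0`,
`h'(t₀) = c ∈ (-1,0)`, which stays positive up to a time `T > t₀` with `h'(T) = 0`
(and in particular `h(T) > 0`). -/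
theorem ode_solution_until_critical (a b c t₀ : ℝ) (ha : 0 < a) (hb : 0 < b)
    (hc : c ∈ Set.Ioo (-1 : ℝ) 0) :
    ∃ T, t₀ < T ∧
      ∃ h : ℝ → ℝ, ContDiff ℝ 2 h ∧
        (∀ t ∈ Set.Icc t₀ T, 0 < h t) ∧
        (∀ t ∈ Set.Icc t₀ T, deriv (deriv h) t = (1 - (deriv h t) ^ 2) / (a * h t)) ∧
        h t₀ = b ∧ deriv h t₀ = c ∧ deriv h T = 0 ∧ 0 < h T := by
  obtain ⟨hc1, hc2⟩ := hc
  have hc2' : c < 1 := by linarith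
  have hcsq : 0 < 1 - c ^ 2 := by nlinarith
  set D : ℝ := (1 - c ^ 2) ^ (a / 2) * b with hD_def
  have hD : 0 < D := mul_pos (Real.rpow_pos_of_pos hcsq _) hb
  set K : ℝ := a * D with hK_def
  have hK : 0 < K := mul_pos ha hD
  set e : ℝ := a / 2 + 1 with he_def
  have he1 : 1 ≤ e := by simp only [he_def]; linarith
  set f : ℝ → ℝ := fun x => K * (1 - x ^ 2) ^ (-e : ℝ) with hf_def
  have husq : ∀ x ∈ Ioo (-1:ℝ) 1, 0 < 1 - x ^ 2 := fun x hx => by nlinarith [hx.1, hx.2]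
  have hfpos : ∀ x ∈ Ioo (-1:ℝ) 1, 0 < f x := fun x hx =>
    mul_pos hK (Real.rpow_pos_of_pos (husq x hx) _)
  have hfcont : ContinuousOn f (Ioo (-1:ℝ) 1) := by
    intro x hx
    refine (ContinuousAt.continuousWithinAt ?_)
    exact continuousAt_const.mul (ContinuousAt.comp (x := x)
      (Real.continuousAt_rpow_const _ _ (Or.inl (ne_of_gt (husq x hx))))
      ((continuous_const.sub (continuous_pow 2)).continuousAt))
  have hIoosub : ∀ {q1 q2 : ℝ}, q1 ∈ Ioo (-1:ℝ) 1 → q2 ∈ Ioo (-1:ℝ) 1 →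
      uIcc q1 q2 ⊆ Ioo (-1:ℝ) 1 := fun h1 h2 => Set.ordConnected_Ioo.uIcc_subset h1 h2
  have hint : ∀ q1 ∈ Ioo (-1:ℝ) 1, ∀ q2 ∈ Ioo (-1:ℝ) 1, IntervalIntegrable f volume q1 q2 :=
    fun q1 h1 q2 h2 => (hfcont.mono (hIoosub h1 h2)).intervalIntegrable
  set G : ℝ → ℝ := fun q => t₀ + ∫ x in c..q, f x with hG_def
  have hcmem : c ∈ Ioo (-1:ℝ) 1 := ⟨hc1, hc2'⟩
  have hzmem : (0:ℝ) ∈ Ioo (-1:ℝ) 1 := by norm_num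
  have hGc : G c = t₀ := by simp [hG_def]
  have hGmono : StrictMonoOn G (Ioo (-1:ℝ) 1) := by
    intro q1 h1 q2 h2 h12
    have hpos : 0 < ∫ x in q1..q2, f x :=
      intervalIntegral_pos_of_pos_on (hint _ h1 _ h2)
        (fun x hx => hfpos x ⟨lt_trans h1.1 hx.1, lt_trans hx.2 h2.2⟩) h12
    have hsplit : (∫ x in c..q1, f x) + ∫ x in q1..q2, f x = ∫ x in c..q2, f x :=
      integral_add_adjacent_intervals (hint _ hcmem _ h1) (hint _ h1 _ h2)
    simp only [hG_def]
    linarith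
  have hGderiv : ∀ q ∈ Ioo (-1:ℝ) 1, HasDerivAt G (f q) q := by
    intro q hq
    exact (intervalIntegral.integral_hasDerivAt_right (hint _ hcmem _ hq)
      (hfcont.stronglyMeasurableAtFilter isOpen_Ioo q hq)
      (hfcont.continuousAt (isOpen_Ioo.mem_nhds hq))).const_add t₀
  have hbound1 : ∀ x ∈ Ioo (-1:ℝ) 1, K/2 * (1-x)⁻¹ ≤ f x := by
    intro x hx
    have hu := husq x hx
    have h1 : (1 - x^2) ^ (-(1:ℝ)) ≤ (1 - x^2) ^ (-e) :=
      Real.rpow_le_rpow_of_exponent_ge hu (by nlinarith) (by linarith)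
    have h2 : (1 - x^2) ^ (-(1:ℝ)) = (1 - x^2)⁻¹ := Real.rpow_neg_one _
    have h3 : (2*(1-x))⁻¹ ≤ (1 - x^2)⁻¹ := by
      apply inv_anti₀ hu
      nlinarith
    have h4 : K/2 * (1-x)⁻¹ = K * (2*(1-x))⁻¹ := by
      rw [mul_inv]; ring
    rw [h4, hf_def]
    have := le_trans h3 (h2 ▸ h1)
    exact mul_le_mul_of_nonneg_left this (le_of_lt hK)
  have hbound2 : ∀ x ∈ Ioo (-1:ℝ) 1, K/2 * (1+x)⁻¹ ≤ f x := by
    intro x hx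
    have hu := husq x hx
    have h1 : (1 - x^2) ^ (-(1:ℝ)) ≤ (1 - x^2) ^ (-e) :=
      Real.rpow_le_rpow_of_exponent_ge hu (by nlinarith) (by linarith)
    have h2 : (1 - x^2) ^ (-(1:ℝ)) = (1 - x^2)⁻¹ := Real.rpow_neg_one _
    have h3 : (2*(1+x))⁻¹ ≤ (1 - x^2)⁻¹ := by
      apply inv_anti₀ hu
      nlinarith
    have h4 : K/2 * (1+x)⁻¹ = K * (2*(1+x))⁻¹ := by
      rw [mul_inv]; ring
    rw [h4, hf_def]
    have := le_trans h3 (h2 ▸ h1)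
    exact mul_le_mul_of_nonneg_left this (le_of_lt hK)
  have hlog1 : ∀ q1 ∈ Ioo (-1:ℝ) 1, ∀ q2 ∈ Ioo (-1:ℝ) 1, q1 ≤ q2 →
      K/2 * (Real.log (1-q1) - Real.log (1-q2)) ≤ ∫ x in q1..q2, f x := by
    intro q1 h1 q2 h2 h12
    have hsub := hIoosub h1 h2
    have hcontb : ContinuousOn (fun x => K/2 * (1-x)⁻¹) (uIcc q1 q2) := by
      intro x hx
      have : (1:ℝ) - x ≠ 0 := by have := (hsub hx).2; intro h; linarith [sub_eq_zero.mp h]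
      exact (continuousAt_const.mul ((continuous_const.sub continuous_id).continuousAt.inv₀
        (by simpa using this))).continuousWithinAt
    have hib : IntervalIntegrable (fun x => K/2 * (1-x)⁻¹) volume q1 q2 :=
      hcontb.intervalIntegrable
    have heval : ∫ x in q1..q2, K/2 * (1-x)⁻¹
        = (-(K/2) * Real.log (1-q2)) - (-(K/2) * Real.log (1-q1)) := by
      apply integral_eq_sub_of_hasDerivAt (f := fun x => -(K/2) * Real.log (1-x))
      · intro x hx
        have hx1 : (0:ℝ) < 1 - x := by have := (hsub hx).2; linarith
        have hd : HasDerivAt (fun y : ℝ => 1 - y) (-1) x := by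
          simpa using (hasDerivAt_id x).const_sub 1
        have := (hd.log (ne_of_gt hx1)).const_mul (-(K/2))
        convert this using 1
        case e'_4 => rfl
        field_simp
      · exact hib
    have hmono : (∫ x in q1..q2, K/2 * (1-x)⁻¹) ≤ ∫ x in q1..q2, f x := by
      apply integral_mono_on h12 hib (hint _ h1 _ h2)
      intro x hx
      exact hbound1 x (hsub (by rw [uIcc_of_le h12]; exact hx))
    calc K/2 * (Real.log (1-q1) - Real.log (1-q2))
        = (-(K/2) * Real.log (1-q2)) - (-(K/2) * Real.log (1-q1)) := by ring
      _ = ∫ x in q1..q2, K/2 * (1-x)⁻¹ := heval.symm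
      _ ≤ _ := hmono
  have hlog2 : ∀ q1 ∈ Ioo (-1:ℝ) 1, ∀ q2 ∈ Ioo (-1:ℝ) 1, q1 ≤ q2 →
      K/2 * (Real.log (1+q2) - Real.log (1+q1)) ≤ ∫ x in q1..q2, f x := by
    intro q1 h1 q2 h2 h12
    have hsub := hIoosub h1 h2
    have hcontb : ContinuousOn (fun x => K/2 * (1+x)⁻¹) (uIcc q1 q2) := by
      intro x hx
      have : (1:ℝ) + x ≠ 0 := by have := (hsub hx).1; intro h; linarith
      exact (continuousAt_const.mul ((continuous_const.add continuous_id).continuousAt.inv₀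
        (by simpa using this))).continuousWithinAt
    have hib : IntervalIntegrable (fun x => K/2 * (1+x)⁻¹) volume q1 q2 :=
      hcontb.intervalIntegrable
    have heval : ∫ x in q1..q2, K/2 * (1+x)⁻¹
        = (K/2 * Real.log (1+q2)) - (K/2 * Real.log (1+q1)) := by
      apply integral_eq_sub_of_hasDerivAt (f := fun x => K/2 * Real.log (1+x))
      · intro x hx
        have hx1 : (0:ℝ) < 1 + x := by have := (hsub hx).1; linarith
        have hd : HasDerivAt (fun y : ℝ => 1 + y) 1 x := by
          simpa using (hasDerivAt_id x).const_add 1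
        have := (hd.log (ne_of_gt hx1)).const_mul (K/2)
        convert this using 1
        case e'_4 => rfl
        field_simp
      · exact hib
    have hmono : (∫ x in q1..q2, K/2 * (1+x)⁻¹) ≤ ∫ x in q1..q2, f x := by
      apply integral_mono_on h12 hib (hint _ h1 _ h2)
      intro x hx
      exact hbound2 x (hsub (by rw [uIcc_of_le h12]; exact hx))
    calc K/2 * (Real.log (1+q2) - Real.log (1+q1))
        = (K/2 * Real.log (1+q2)) - (K/2 * Real.log (1+q1)) := by ring
      _ = ∫ x in q1..q2, K/2 * (1+x)⁻¹ := heval.symm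
      _ ≤ _ := hmono
  have hsurj : ∀ t : ℝ, ∃ q ∈ Ioo (-1:ℝ) 1, G q = t := by
    intro t
    set M : ℝ := 2 * (|t - t₀| + 1) / K with hM_def
    have hM : 0 < M := by
      apply div_pos _ hK
      positivity
    have hexp1 : Real.exp (-M) < 1 := by
      have : Real.exp (-M) < Real.exp 0 := Real.exp_lt_exp.mpr (by linarith)
      simpa using this
    have hexp0 : 0 < Real.exp (-M) := Real.exp_pos _
    have h1c : (0:ℝ) < 1 - c := by linarith
    have h1c' : (0:ℝ) < 1 + c := by linarith
    -- upper point
    set s2 : ℝ := 1 - (1 - c) * Real.exp (-M) with hs2_def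
    have key2 : 1 - s2 = (1 - c) * Real.exp (-M) := by simp [hs2_def]
    have hs2c : c ≤ s2 := by
      have := mul_le_mul_of_nonneg_left hexp1.le h1c.le
      linarith [key2]
    have hs2mem : s2 ∈ Ioo (-1:ℝ) 1 := by
      have := mul_pos h1c hexp0
      exact ⟨by linarith, by linarith [key2]⟩
    have hlogs2 : Real.log (1 - s2) = Real.log (1-c) + (-M) := by
      rw [key2, Real.log_mul (ne_of_gt h1c) (Real.exp_ne_zero _), Real.log_exp]
    have hKM : K/2 * M = |t - t₀| + 1 := by
      rw [hM_def]; field_simp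
    have hGs2 : t < G s2 := by
      have hi := hlog1 c hcmem s2 hs2mem hs2c
      rw [hlogs2] at hi
      have hi2 : |t - t₀| + 1 ≤ ∫ x in c..s2, f x := by
        calc |t - t₀| + 1 = K/2 * M := hKM.symm
          _ = K/2 * (Real.log (1-c) - (Real.log (1-c) + -M)) := by ring
          _ ≤ _ := hi
      have habs := le_abs_self (t - t₀)
      have : t₀ + (|t - t₀| + 1) ≤ G s2 := by
        simp only [hG_def]; linarith
      linarith
    -- lower point
    set s1 : ℝ := (1 + c) * Real.exp (-M) - 1 with hs1_def
    have key1 : 1 + s1 = (1 + c) * Real.exp (-M) := by simp [hs1_def]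
    have hs1c : s1 ≤ c := by
      have := mul_le_mul_of_nonneg_left hexp1.le h1c'.le
      linarith [key1]
    have hs1mem : s1 ∈ Ioo (-1:ℝ) 1 := by
      have := mul_pos h1c' hexp0
      exact ⟨by linarith [key1], by linarith⟩
    have hlogs1 : Real.log (1 + s1) = Real.log (1+c) + (-M) := by
      rw [key1, Real.log_mul (ne_of_gt h1c') (Real.exp_ne_zero _), Real.log_exp]
    have hGs1 : G s1 < t := by
      have hi := hlog2 s1 hs1mem c hcmem hs1c
      rw [hlogs1] at hi
      have hi2 : |t - t₀| + 1 ≤ ∫ x in s1..c, f x := by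
        calc |t - t₀| + 1 = K/2 * M := hKM.symm
          _ = K/2 * (Real.log (1+c) - (Real.log (1+c) + -M)) := by ring
          _ ≤ _ := hi
      have hsym : ∫ x in c..s1, f x = -∫ x in s1..c, f x := integral_symm _ _
      have habs := neg_abs_le (t - t₀)
      have : G s1 ≤ t₀ - (|t - t₀| + 1) := by
        simp only [hG_def, hsym]; linarith
      linarith
    have hs1s2 : s1 ≤ s2 := le_trans hs1c hs2c
    have hsubIcc : Icc s1 s2 ⊆ Ioo (-1:ℝ) 1 := Set.ordConnected_Ioo.out hs1mem hs2mem
    have hGcontOn : ContinuousOn G (Icc s1 s2) := fun x hx =>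
      ((hGderiv x (hsubIcc hx)).continuousAt).continuousWithinAt
    obtain ⟨q, hqmem, hGq⟩ := intermediate_value_Icc hs1s2 hGcontOn
      ⟨le_of_lt hGs1, le_of_lt hGs2⟩
    exact ⟨q, hsubIcc hqmem, hGq⟩
  choose p hpmem hpG using hsurj
  have hpleft : ∀ q ∈ Ioo (-1:ℝ) 1, p (G q) = q := fun q hq =>
    hGmono.injOn (hpmem _) hq (hpG (G q))
  have hpt₀ : p t₀ = c := by rw [← hGc]; exact hpleft c hcmem
  have hpmono : StrictMono p := by
    intro t1 t2 h12
    rcases lt_trichotomy (p t1) (p t2) with h | h | h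
    · exact h
    · exfalso; have := hpG t1; rw [h, hpG t2] at this; linarith
    · exfalso
      have := hGmono (hpmem t2) (hpmem t1) h
      rw [hpG t1, hpG t2] at this; linarith
  have hpcont : Continuous p := by
    rw [continuous_iff_continuousAt]
    intro t
    rw [Metric.continuousAt_iff]
    intro ε hε
    obtain ⟨hq1', hq2'⟩ := hpmem t
    set q1 : ℝ := max (p t - ε/2) ((p t - 1)/2) with hq1_def
    set q2 : ℝ := min (p t + ε/2) ((p t + 1)/2) with hq2_def
    have hq1mem : q1 ∈ Ioo (-1:ℝ) 1 := by
      constructor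
      · have : (p t - 1)/2 ≤ q1 := le_max_right _ _
        linarith
      · have h1 : p t - ε/2 < p t := by linarith
        have h2 : (p t - 1)/2 < p t := by linarith
        exact lt_trans (max_lt h1 h2) hq2'
    have hq1lt : q1 < p t := max_lt (by linarith) (by linarith)
    have hq2mem : q2 ∈ Ioo (-1:ℝ) 1 := by
      constructor
      · have h1 : p t < p t + ε/2 := by linarith
        have h2 : p t < (p t + 1)/2 := by linarith
        exact lt_trans hq1' (lt_min h1 h2)
      · have : q2 ≤ (p t + 1)/2 := min_le_right _ _
        linarith
    have hq2gt : p t < q2 := lt_min (by linarith) (by linarith)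
    have hG1 : G q1 < t := by
      have := hGmono hq1mem (hpmem t) hq1lt
      rwa [hpG t] at this
    have hG2 : t < G q2 := by
      have := hGmono (hpmem t) hq2mem hq2gt
      rwa [hpG t] at this
    refine ⟨min (t - G q1) (G q2 - t), lt_min (by linarith) (by linarith), ?_⟩
    intro s hs
    rw [Real.dist_eq] at hs ⊢
    have hs1 : G q1 < s := by
      have h1 := abs_lt.mp hs
      have h2 : min (t - G q1) (G q2 - t) ≤ t - G q1 := min_le_left _ _
      linarith [h1.1]
    have hs2 : s < G q2 := by
      have h1 := abs_lt.mp hs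
      have h2 : min (t - G q1) (G q2 - t) ≤ G q2 - t := min_le_right _ _
      linarith [h1.2]
    have hps1 : q1 < p s := by
      have := hpmono hs1
      rwa [hpleft q1 hq1mem] at this
    have hps2 : p s < q2 := by
      have := hpmono hs2
      rwa [hpleft q2 hq2mem] at this
    rw [abs_lt]
    constructor
    · have : p t - ε/2 ≤ q1 := le_max_left _ _
      linarith
    · have : q2 ≤ p t + ε/2 := min_le_left _ _
      linarith
  have hpderiv : ∀ t, HasDerivAt p ((f (p t))⁻¹) t := by
    intro t
    exact HasDerivAt.of_local_left_inverse hpcont.continuousAt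
      (hGderiv _ (hpmem t)) (ne_of_gt (hfpos _ (hpmem t)))
      (Filter.Eventually.of_forall hpG)
  have hu : ∀ t, 0 < 1 - (p t) ^ 2 := fun t => husq _ (hpmem t)
  have hfinv : ∀ t, (f (p t))⁻¹ = (1 - (p t)^2) ^ (e:ℝ) / K := by
    intro t
    have hrw : ((1 - (p t)^2) : ℝ) ^ (-e : ℝ) = (((1 - (p t)^2) : ℝ) ^ (e : ℝ))⁻¹ :=
      Real.rpow_neg (hu t).le e
    simp only [hf_def]
    rw [hrw, mul_inv, inv_inv]
    ring
  set h : ℝ → ℝ := fun s => D * (1 - (p s) ^ 2) ^ (-(a/2) : ℝ) with hh_def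
  have hexp : ∀ t, (1 - (p t)^2) ^ (e:ℝ) * (1 - (p t)^2) ^ (-(a/2) - 1 : ℝ) = 1 := by
    intro t
    rw [← Real.rpow_add (hu t)]
    have : (e : ℝ) + (-(a/2) - 1) = 0 := by rw [he_def]; ring
    rw [this, Real.rpow_zero]
  have hhd : ∀ t, HasDerivAt h (p t) t := by
    intro t
    have h1 := ((hpderiv t).pow 2).const_sub 1
    have h2 := (h1.rpow_const (p := (-(a/2) : ℝ)) (Or.inl (ne_of_gt (hu t)))).const_mul D
    convert h2 using 1
    case e'_4 => rfl
    case e'_5 => rfl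
    case e'_8 => rfl
    rw [hfinv t, hK_def]
    have hane : a ≠ 0 := ne_of_gt ha
    have hDne : D ≠ 0 := ne_of_gt hD
    have step1 : p t = (D * a / (a * D)) * p t * 1 := by
      rw [mul_one]
      field_simp
    calc p t = (D * a / (a * D)) * p t * 1 := step1
      _ = (D * a / (a * D)) * p t
          * ((1 - p t ^ 2) ^ (e:ℝ) * (1 - p t ^ 2) ^ (-(a/2) - 1 : ℝ)) := by rw [hexp t]
      _ = D * (-((2:ℕ) * p t ^ (2 - 1) * ((1 - p t ^ 2) ^ (e:ℝ) / (a * D))) * -(a / 2)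
          * (1 - p t ^ 2) ^ (-(a / 2) - 1 : ℝ)) := by
        push_cast
        field_simp
  have hderivh : deriv h = p := funext fun t => (hhd t).deriv
  have hdiffh : Differentiable ℝ h := fun t => (hhd t).differentiableAt
  have hderivp : deriv p = fun t => (1 - (p t)^2) ^ (e:ℝ) / K :=
    funext fun t => by rw [(hpderiv t).deriv, hfinv t]
  have hdiffp : Differentiable ℝ p := fun t => (hpderiv t).differentiableAt
  have hcontdp : Continuous (deriv p) := by
    rw [hderivp]
    refine Continuous.div_const ?_ K
    rw [continuous_iff_continuousAt]
    intro t
    exact ContinuousAt.comp (x := t)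
      (Real.continuousAt_rpow_const _ _ (Or.inl (ne_of_gt (hu t))))
      ((continuous_const.sub (hpcont.pow 2)).continuousAt)
  have hC2 : ContDiff ℝ 2 h := by
    rw [show (2 : WithTop ℕ∞) = 1 + 1 by norm_num, contDiff_succ_iff_deriv]
    refine ⟨hdiffh, by simp, ?_⟩
    rw [hderivh, contDiff_one_iff_deriv]
    exact ⟨hdiffp, hcontdp⟩
  have hhpos : ∀ t, 0 < h t := fun t => mul_pos hD (Real.rpow_pos_of_pos (hu t) _)
  refine ⟨G 0, ?_, h, hC2, fun t _ => hhpos t, ?_, ?_, ?_, ?_, hhpos _⟩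
  · have hpos : 0 < ∫ x in c..(0:ℝ), f x :=
      intervalIntegral_pos_of_pos_on (hint _ hcmem _ hzmem)
        (fun x hx => hfpos x ⟨lt_trans hc1 hx.1, lt_trans hx.2 one_pos⟩) hc2
    simp only [hG_def]
    linarith
  · intro t _
    rw [hderivh, (hpderiv t).deriv, hfinv t]
    have hUpow : ((1 - (p t)^2) : ℝ) ^ (-(a/2) : ℝ) = (((1 - (p t)^2):ℝ) ^ ((a/2) : ℝ))⁻¹ :=
      Real.rpow_neg (hu t).le _
    have hsplit : ((1 - (p t)^2) : ℝ) ^ (e : ℝ)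
        = (1 - (p t)^2) * ((1 - (p t)^2):ℝ) ^ ((a/2) : ℝ) := by
      rw [he_def, Real.rpow_add (hu t), Real.rpow_one]
      ring
    have hUa : 0 < ((1 - (p t)^2):ℝ) ^ ((a/2):ℝ) := Real.rpow_pos_of_pos (hu t) _
    simp only [hh_def]
    rw [hUpow, hsplit, hK_def]
    field_simp
    try ring
  · simp only [hh_def, hpt₀, hD_def]
    have hone : ((1 - c^2) : ℝ) ^ ((a/2):ℝ) * (1 - c^2) ^ (-(a/2):ℝ) = 1 := by
      rw [← Real.rpow_add hcsq]; norm_num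
    linear_combination b * hone
  · rw [hderivh]; exact hpt₀
  · rw [hderivh]; exact hpleft 0 hzmem
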